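/- Let k be a field of characteristic 0 with algebraic closure L, and let I ⊆ k[x_1,…,x_n] be an ideal. Then the quotient k[x_1,…,x_n]/I is finite-dimensional as a k-vector space if and only if the variety V_L(I) ⊆ L^n is a finite set. -/

import Mathlib

open MvPolynomial

variable {k L : Type} [Field k] [Field L] [Algebra k L] {n : ℕ}

noncomputable def Tmap (r : L →ₗ[k] k) (h : MvPolynomial (Fin n) L) : MvPolynomial (Fin n) k :=
  AddMonoidAlgebra.ofCoeff (Finsupp.mapRange r r.map_zero (AddMonoidAlgebra.coeff h))

lemma Tmap_coeff (r : L →ₗ[k] k) (h : MvPolynomial (Fin n) L) (d : Fin n →₀ ℕ) :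
    coeff d (Tmap r h) = r (coeff d h) := Finsupp.mapRange_apply (hf := r.map_zero)

lemma Tmap_add (r : L →ₗ[k] k) (g h : MvPolynomial (Fin n) L) :
    Tmap r (g + h) = Tmap r g + Tmap r h := by
  ext d; simp [Tmap_coeff, coeff_add]

lemma Tmap_zero (r : L →ₗ[k] k) : Tmap (n := n) r 0 = 0 := by
  ext d; simp [Tmap_coeff]

lemma Tmap_mul_map (r : L →ₗ[k] k) (c : MvPolynomial (Fin n) L) (a : MvPolynomial (Fin n) k) :
    Tmap r (c * MvPolynomial.map (algebraMap k L) a) = Tmap r c * a := by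
  ext d
  rw [Tmap_coeff, coeff_mul, coeff_mul, map_sum]
  refine Finset.sum_congr rfl fun x _ => ?_
  rw [coeff_map, Tmap_coeff]
  have : coeff x.1 c * (algebraMap k L) (coeff x.2 a) = coeff x.2 a • coeff x.1 c := by
    rw [Algebra.smul_def]; ring
  rw [this, map_smul, smul_eq_mul, mul_comm]

lemma Tmap_map (r : L →ₗ[k] k) (hr : ∀ x : k, r (algebraMap k L x) = x)
    (f : MvPolynomial (Fin n) k) : Tmap r (MvPolynomial.map (algebraMap k L) f) = f := by
  ext d; rw [Tmap_coeff, coeff_map, hr]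

lemma descend (I : Ideal (MvPolynomial (Fin n) k)) (f : MvPolynomial (Fin n) k)
    (hf : MvPolynomial.map (algebraMap k L) f ∈
      I.map (MvPolynomial.map (algebraMap k L) : MvPolynomial (Fin n) k →+* MvPolynomial (Fin n) L)) :
    f ∈ I := by
  obtain ⟨r, hr⟩ := LinearMap.exists_leftInverse_of_injective (Algebra.linearMap k L)
    (LinearMap.ker_eq_bot.mpr (algebraMap k L).injective)
  have hr' : ∀ x : k, r (algebraMap k L x) = x := fun x => congrArg (·) (LinearMap.congr_fun hr x)
  have key : ∀ g ∈ I.map (MvPolynomial.map (algebraMap k L) : MvPolynomial (Fin n) k →+* MvPolynomial (Fin n) L),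
      ∀ c, Tmap r (c * g) ∈ I := by
    intro g hg
    refine Submodule.span_induction ?_ ?_ ?_ ?_ hg
    · rintro x ⟨a, ha, rfl⟩ c
      rw [Tmap_mul_map]
      exact I.mul_mem_left _ ha
    · intro c; rw [mul_zero, Tmap_zero]; exact I.zero_mem
    · intro x y _ _ hx hy c
      rw [mul_add, Tmap_add]; exact I.add_mem (hx c) (hy c)
    · intro a x _ hx c
      rw [smul_eq_mul, ← mul_assoc]; exact hx (c * a)
  have := key _ hf 1
  rwa [one_mul, Tmap_map r hr'] at this

/-- Finiteness Theorem: for an ideal `I ⊆ k[x_1,…,x_n]` over a field `k`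
of characteristic 0 with algebraic closure `L`, the quotient `k[X]/I` is finite-dimensional
over `k` iff the variety `V_L(I) ⊆ L^n` is finite. -/
theorem stmt_15 (k L : Type) [Field k] [CharZero k] [Field L] [Algebra k L]
    [IsAlgClosure k L] (n : ℕ) (I : Ideal (MvPolynomial (Fin n) k)) :
    FiniteDimensional k (MvPolynomial (Fin n) k ⧸ I)
      ↔ {p : Fin n → L | ∀ f ∈ I, MvPolynomial.aeval p f = 0}.Finite := by
  haveI : IsAlgClosed L := IsAlgClosure.isAlgClosed k
  set φ : MvPolynomial (Fin n) k →+* MvPolynomial (Fin n) L :=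
    (MvPolynomial.map (algebraMap k L) : MvPolynomial (Fin n) k →+* MvPolynomial (Fin n) L) with hφ
  have heval : ∀ (x : Fin n → L) (f : MvPolynomial (Fin n) k), eval x (φ f) = aeval x f := by
    intro x f
    rw [hφ, eval_map, ← aeval_def]
  constructor
  · intro h
    have hint : ∀ i : Fin n, IsIntegral k (Ideal.Quotient.mkₐ k I (X i)) :=
      fun i => IsIntegral.of_finite k _
    set p : Fin n → Polynomial k := fun i => minpoly k (Ideal.Quotient.mkₐ k I (X i)) with hp
    have hGi : ∀ i, Polynomial.aeval (X i : MvPolynomial (Fin n) k) (p i) ∈ I := by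
      intro i
      have h2 := Polynomial.aeval_algHom_apply (Ideal.Quotient.mkₐ k I) (X i) (p i)
      rw [minpoly.aeval] at h2
      rw [← Ideal.Quotient.eq_zero_iff_mem]
      exact ((Ideal.Quotient.mkₐ_eq_mk k I) ▸ h2).symm
    refine Set.Finite.subset (Set.Finite.pi (t := fun i =>
      {a : L | ((p i).map (algebraMap k L)).IsRoot a}) fun i =>
        Polynomial.finite_setOf_isRoot ?_) ?_
    · exact (Polynomial.map_ne_zero_iff (algebraMap k L).injective).mpr
        (minpoly.ne_zero (hint i))
    · intro x hx
      refine Set.mem_pi.mpr fun i _ => ?_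
      have h3 := hx _ (hGi i)
      rw [← Polynomial.aeval_algHom_apply (MvPolynomial.aeval x) (X i) (p i), aeval_X] at h3
      simpa [Polynomial.IsRoot, Polynomial.eval_map, ← Polynomial.aeval_def] using h3
  · intro hV
    set I' := I.map φ with hI'
    have hZL : MvPolynomial.zeroLocus L I' = {p : Fin n → L | ∀ f ∈ I, MvPolynomial.aeval p f = 0} := by
      ext x
      constructor
      · intro hx f hf
        have := hx (φ f) (Ideal.mem_map_of_mem _ hf)
        rwa [aeval_eq_eval, heval] at this
      · intro hx g hg
        have hle : I' ≤ RingHom.ker (MvPolynomial.eval x : MvPolynomial (Fin n) L →+* L) := by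
          rw [hI', Ideal.map_le_iff_le_comap]
          intro f hf
          rw [Ideal.mem_comap, RingHom.mem_ker, heval]
          exact hx f hf
        exact hle hg
    have key : ∀ i : Fin n, ∃ q : Polynomial k, q ≠ 0 ∧
        Polynomial.aeval (X i : MvPolynomial (Fin n) k) q ∈ I := by
      intro i
      set S : Finset L := (hV.image (fun p => p i)).toFinset with hS
      have halg : ∀ a : L, IsIntegral k a := fun a =>
        (IsAlgClosure.isAlgebraic.isAlgebraic a).isIntegral
      set q : Polynomial k := ∏ a ∈ S, minpoly k a with hq
      have hq0 : q ≠ 0 := Finset.prod_ne_zero_iff.mpr fun a _ => minpoly.ne_zero (halg a)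
      have hvan : φ (Polynomial.aeval (X i) q) ∈ vanishingIdeal L (zeroLocus L I') := by
        rw [mem_vanishingIdeal_iff]
        intro x hx
        rw [aeval_eq_eval, heval, ← Polynomial.aeval_algHom_apply (MvPolynomial.aeval x) (X i) q, aeval_X, hq,
          map_prod]
        refine Finset.prod_eq_zero (i := x i) ?_ (minpoly.aeval k (x i))
        rw [hS, Set.Finite.mem_toFinset]
        exact ⟨x, hZL ▸ hx, rfl⟩
      rw [vanishingIdeal_zeroLocus_eq_radical] at hvan
      obtain ⟨m, hm⟩ := hvan
      refine ⟨q ^ m, pow_ne_zero m hq0, ?_⟩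
      exact descend (L := L) I _ (by simpa only [map_pow] using hm)
    choose q hq0 hqI using key
    haveI ft : Algebra.FiniteType k (MvPolynomial (Fin n) k ⧸ I) :=
      Algebra.FiniteType.of_surjective (Ideal.Quotient.mkₐ k I)
        (Ideal.Quotient.mkₐ_surjective k I)
    have hint : ∀ i : Fin n, IsIntegral k (Ideal.Quotient.mkₐ k I (X i)) := by
      intro i
      refine IsAlgebraic.isIntegral ⟨q i, hq0 i, ?_⟩
      rw [Polynomial.aeval_algHom_apply (Ideal.Quotient.mkₐ k I) (X i) (q i),
        Ideal.Quotient.mkₐ_eq_mk, Ideal.Quotient.eq_zero_iff_mem]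
      exact hqI i
    have hgen : Algebra.adjoin k (Set.range fun i => Ideal.Quotient.mkₐ k I (X i)) = ⊤ := by
      have : (Set.range fun i => Ideal.Quotient.mkₐ k I (X i)) =
          (Ideal.Quotient.mkₐ k I) '' (Set.range X) := by
        rw [← Set.range_comp]; rfl
      rw [this, Algebra.adjoin_image, MvPolynomial.adjoin_range_X, Algebra.map_top,
        (AlgHom.range_eq_top _).mpr (Ideal.Quotient.mkₐ_surjective k I)]
    haveI : Algebra.IsIntegral k (MvPolynomial (Fin n) k ⧸ I) := by
      refine ⟨fun x => ?_⟩
      have hle : Algebra.adjoin k (Set.range fun i => Ideal.Quotient.mkₐ k I (X i)) ≤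
          integralClosure k (MvPolynomial (Fin n) k ⧸ I) := by
        apply Algebra.adjoin_le
        rintro _ ⟨i, rfl⟩
        exact hint i
      exact hle (hgen ▸ Algebra.mem_top)
    exact Algebra.IsIntegral.finite
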